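/- For every permutation e : ℕ ≃ ℕ and every sequence a : ℕ → Ordinal, v (a ∘ e) = v a; that is, the smallest weakly monotone operation strictly monotone on z-special elements is invariant under permutations of the summands. -/
import Mathlib


/-- `b ≺ a` iff there are an index `i₀`, a finite set `F ⊆ ℕ` and an ordinal `β` with
`b i₀ ≤ β < a i₀`, `b i ≤ a i` for all `i`, and `b i ≤ β` for all `i ∉ F`. -/
def seqPrec (b a : ℕ → Ordinal.{0}) : Prop :=
  ∃ (i₀ : ℕ) (F : Finset ℕ) (β : Ordinal),
    b i₀ ≤ β ∧ β < a i₀ ∧ (∀ i, b i ≤ a i) ∧ ∀ i ∉ F, b i ≤ β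

/-- `v a`: the rank of the sequence `a` in the well-founded relation `≺`. -/
noncomputable def vRank (hwf : WellFounded seqPrec) (a : ℕ → Ordinal.{0}) : Ordinal.{1} :=
  @IsWellFounded.rank _ seqPrec ⟨hwf⟩ a

lemma seqPrec_comp (e : Equiv.Perm ℕ) {b a : ℕ → Ordinal.{0}} (h : seqPrec b a) :
    seqPrec (b ∘ e) (a ∘ e) := by
  obtain ⟨i₀, F, β, h1, h2, h3, h4⟩ := h
  refine ⟨e.symm i₀, F.image e.symm, β, ?_, ?_, fun i => h3 _, fun i hi => ?_⟩
  · simpa using h1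
  · simpa using h2
  · exact h4 (e i) fun hF => hi (Finset.mem_image.2 ⟨e i, hF, by simp⟩)

lemma seqPrec_comp_iff (e : Equiv.Perm ℕ) (b a : ℕ → Ordinal.{0}) :
    seqPrec (b ∘ e) (a ∘ e) ↔ seqPrec b a := by
  refine ⟨fun h => ?_, seqPrec_comp e⟩
  have := seqPrec_comp e.symm h
  simpa [Function.comp_def] using this

/-- `v` is invariant under permutations of the summands. -/
theorem vRank_comp_perm (hwf : WellFounded seqPrec) (e : Equiv.Perm ℕ)
    (a : ℕ → Ordinal.{0}) :
    vRank hwf (a ∘ e) = vRank hwf a := by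
  haveI : IsWellFounded (ℕ → Ordinal.{0}) seqPrec := ⟨hwf⟩
  induction a using hwf.induction with
  | _ a ih =>
    show IsWellFounded.rank seqPrec (a ∘ e) = IsWellFounded.rank seqPrec a
    rw [IsWellFounded.rank_eq, IsWellFounded.rank_eq]
    refine le_antisymm (Ordinal.iSup_le fun b' => ?_) (Ordinal.iSup_le fun c' => ?_)
    case _ =>
      obtain ⟨b, hb⟩ := b'
      have hc : seqPrec (b ∘ e.symm) a := by
        have := (seqPrec_comp_iff e.symm b (a ∘ e)).2 hb
        simpa [Function.comp_def] using this
      have hr : IsWellFounded.rank seqPrec b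
          = IsWellFounded.rank seqPrec (b ∘ e.symm) := by
        have := ih _ hc
        simp only [vRank] at this
        rw [← this]
        congr 1
        ext i; simp [Function.comp]
      rw [hr]
      exact Ordinal.le_iSup (fun x : {x // seqPrec x a} => Order.succ (IsWellFounded.rank seqPrec x.1))
        ⟨b ∘ e.symm, hc⟩
    case _ =>
      obtain ⟨c, hc⟩ := c'
      have hb : seqPrec (c ∘ e) (a ∘ e) := seqPrec_comp e hc
      have hr : IsWellFounded.rank seqPrec c
          = IsWellFounded.rank seqPrec (c ∘ e) := (ih _ hc).symm
      rw [hr]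
      exact Ordinal.le_iSup (fun x : {x // seqPrec x (a ∘ e)} =>
        Order.succ (IsWellFounded.rank seqPrec x.1)) ⟨c ∘ e, hb⟩
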